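/- For positive integers n and k ≥ 2, ∫₀¹ x^{n-1} Li_k(x) dx = ∑_{j=1}^{k-1} (-1)^{j-1} ζ(k+1-j)/n^j + (-1)^{k-1} H_n / n^k, where H_n = ∑_{m=1}^n 1/m is the n-th harmonic number. -/

import Mathlib

/-- The classical polylogarithm `Li_k(x) = ∑_{m≥1} x^m / m^k`. -/
noncomputable def Li (k : ℕ) (x : ℝ) : ℝ := ∑' m : ℕ, x ^ (m + 1) / ((m : ℝ) + 1) ^ k

/-- Riemann zeta value `ζ(s) = ∑_{m≥1} 1/m^s`. -/
noncomputable def zetaVal (s : ℕ) : ℝ := ∑' m : ℕ, (1 : ℝ) / ((m : ℝ) + 1) ^ s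

/-- Harmonic number. -/
noncomputable def harmonicNum (n : ℕ) : ℝ := ∑ m ∈ Finset.Icc 1 n, (1 : ℝ) / m

open Filter Finset

lemma sq_summable : Summable (fun m : ℕ => 1 / ((m:ℝ)+1)^2) := by
  have := (summable_nat_add_iff (f := fun m : ℕ => 1 / (m:ℝ)^2) 1).mpr
    (Real.summable_one_div_nat_pow.mpr one_lt_two)
  refine this.congr fun m => by push_cast; ring

lemma summable_S (k n : ℕ) (hk : 1 ≤ k) (hn : 0 < n) :
    Summable (fun m : ℕ => 1 / (((m:ℝ)+1)^k * ((m:ℝ)+1+n))) := by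
  refine Summable.of_nonneg_of_le (fun m => ?_) (fun m => ?_) sq_summable
  · positivity
  have h1 : ((m:ℝ)+1)^1 ≤ ((m:ℝ)+1)^k := pow_le_pow_right₀ (le_add_of_nonneg_left (Nat.cast_nonneg m)) hk
  rw [pow_one] at h1
  have h2 : (m:ℝ)+1 ≤ (m:ℝ)+1+n := by
    have : (0:ℝ) ≤ n := Nat.cast_nonneg n
    linarith
  refine one_div_le_one_div_of_le (by positivity) ?_
  calc ((m:ℝ)+1)^2 = ((m:ℝ)+1) * ((m:ℝ)+1) := by ring
    _ ≤ ((m:ℝ)+1)^k * ((m:ℝ)+1+n) := by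
        apply mul_le_mul h1 h2 (by positivity) (by positivity)

lemma harmonicNum_range (n : ℕ) : harmonicNum n = ∑ m ∈ range n, 1 / ((m:ℝ)+1) := by
  rw [harmonicNum, ← Finset.Ico_add_one_right_eq_Icc, Finset.sum_Ico_eq_sum_range]
  refine Finset.sum_congr (by norm_num) fun i _ => by push_cast; ring_nf

lemma partial_sum_eq (n M : ℕ) :
    ∑ m ∈ range M, (1/((m:ℝ)+1) - 1/((m:ℝ)+1+n))
      = harmonicNum n - ∑ m ∈ range n, 1/((M:ℝ)+m+1) := by
  induction M with
  | zero =>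
    simp [harmonicNum_range]
  | succ M ih =>
    rw [Finset.sum_range_succ, ih]
    have tel : (∑ m ∈ range n, 1/((M:ℝ)+m+1)) - ∑ m ∈ range n, 1/((M:ℝ)+1+m+1)
        = 1/((M:ℝ)+1) - 1/((M:ℝ)+1+n) := by
      have h := Finset.sum_range_sub' (f := fun i : ℕ => 1/((M:ℝ)+i+1)) n
      rw [Finset.sum_sub_distrib] at h
      have h2 : ∑ m ∈ range n, 1/((M:ℝ)+((m+1:ℕ):ℝ)+1) = ∑ m ∈ range n, 1/((M:ℝ)+1+m+1) :=
        Finset.sum_congr rfl fun i _ => by push_cast; ring_nf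
      rw [h2] at h
      rw [h]
      push_cast
      ring
    push_cast
    linarith [tel]

lemma summable_zeta (s : ℕ) (hs : 2 ≤ s) :
    Summable (fun m : ℕ => 1 / ((m:ℝ)+1)^s) := by
  have := (summable_nat_add_iff (f := fun m : ℕ => 1 / (m:ℝ)^s) 1).mpr
    (Real.summable_one_div_nat_pow.mpr (by omega))
  refine this.congr fun m => by push_cast; ring_nf

lemma tendsto_tail (n : ℕ) :
    Filter.Tendsto (fun M : ℕ => ∑ m ∈ range n, 1/((M:ℝ)+m+1)) Filter.atTop (nhds 0) := by
  have h0 : (0:ℝ) = ∑ m ∈ range n, (0:ℝ) := by simp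
  rw [h0]
  refine tendsto_finset_sum _ fun m _ => ?_
  have h1 : Filter.Tendsto (fun M : ℕ => (M:ℝ)+m+1) Filter.atTop Filter.atTop := by
    apply Filter.tendsto_atTop_add_const_right
    apply Filter.tendsto_atTop_add_const_right
    exact tendsto_natCast_atTop_atTop
  simpa [Function.comp_def, one_div] using tendsto_inv_atTop_zero.comp h1

lemma tsum_base (n : ℕ) (hn : 0 < n) :
    ∑' m : ℕ, 1/(((m:ℝ)+1) * ((m:ℝ)+1+n)) = harmonicNum n / n := by
  have hn' : ((n:ℝ)) ≠ 0 := Nat.cast_ne_zero.mpr hn.ne'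
  have hsS : Summable (fun m : ℕ => 1 / (((m:ℝ)+1)^1 * ((m:ℝ)+1+n))) := summable_S 1 n le_rfl hn
  have hs : Summable (fun m : ℕ => 1/((m:ℝ)+1) - 1/((m:ℝ)+1+n)) := by
    refine (hsS.mul_left (n:ℝ)).congr fun m => ?_
    have hm1 : ((m:ℝ)+1) ≠ 0 := by positivity
    have hm2 : ((m:ℝ)+1+n) ≠ 0 := by positivity
    field_simp
    ring
  have hlim := hs.hasSum.tendsto_sum_nat
  have hlim2 : Filter.Tendsto (fun M : ℕ => ∑ m ∈ range M, (1/((m:ℝ)+1) - 1/((m:ℝ)+1+n)))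
      Filter.atTop (nhds (harmonicNum n)) := by
    simp only [partial_sum_eq]
    have := (tendsto_const_nhds (x := harmonicNum n) (f := Filter.atTop (α := ℕ))).sub (tendsto_tail n)
    simpa using this
  have hT : ∑' m : ℕ, (1/((m:ℝ)+1) - 1/((m:ℝ)+1+n)) = harmonicNum n :=
    tendsto_nhds_unique hlim hlim2
  have hpt : ∀ m : ℕ, 1/(((m:ℝ)+1) * ((m:ℝ)+1+n))
      = (1/(n:ℝ)) * (1/((m:ℝ)+1) - 1/((m:ℝ)+1+n)) := by
    intro m
    have hm1 : ((m:ℝ)+1) ≠ 0 := by positivity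
    have hm2 : ((m:ℝ)+1+n) ≠ 0 := by positivity
    field_simp
    ring
  rw [tsum_congr hpt, tsum_mul_left, hT]
  ring

lemma tsum_rec (k n : ℕ) (hk : 1 ≤ k) (hn : 0 < n) :
    ∑' m : ℕ, 1/(((m:ℝ)+1)^(k+1) * ((m:ℝ)+1+n))
      = zetaVal (k+1) / n - (∑' m : ℕ, 1/(((m:ℝ)+1)^k * ((m:ℝ)+1+n))) / n := by
  have hn' : ((n:ℝ)) ≠ 0 := Nat.cast_ne_zero.mpr hn.ne'
  have hz := summable_zeta (k+1) (by omega)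
  have hS := summable_S k n hk hn
  have hpt : ∀ m : ℕ, 1/(((m:ℝ)+1)^(k+1) * ((m:ℝ)+1+n))
      = (1/(n:ℝ)) * (1/((m:ℝ)+1)^(k+1) - 1/(((m:ℝ)+1)^k * ((m:ℝ)+1+n))) := by
    intro m
    have hm1 : ((m:ℝ)+1) ≠ 0 := by positivity
    have hm2 : ((m:ℝ)+1+n) ≠ 0 := by positivity
    have hm3 : ((m:ℝ)+1)^k ≠ 0 := pow_ne_zero _ hm1
    field_simp
    ring
  rw [tsum_congr hpt, tsum_mul_left, Summable.tsum_sub hz hS, zetaVal]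
  ring

lemma S_eq (n : ℕ) (hn : 0 < n) (p : ℕ) :
    ∑' m : ℕ, 1/(((m:ℝ)+1)^(p+1) * ((m:ℝ)+1+n))
      = (∑ j ∈ Finset.Icc 1 p, (-1:ℝ)^(j-1) * zetaVal (p+2-j) / (n:ℝ)^j)
        + (-1:ℝ)^p * harmonicNum n / (n:ℝ)^(p+1) := by
  induction p with
  | zero =>
    simp only [zero_add, pow_one, pow_zero, one_mul]
    rw [Finset.Icc_eq_empty (by norm_num), Finset.sum_empty, zero_add, ← tsum_base n hn]
  | succ p ih =>
    rw [tsum_rec (p+1) n (by omega) hn, ih]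
    have key : ∑ j ∈ Finset.Icc 1 (p+1), (-1:ℝ)^(j-1) * zetaVal (p+1+2-j) / (n:ℝ)^j
        = zetaVal (p+2)/n
          - (∑ j ∈ Finset.Icc 1 p, (-1:ℝ)^(j-1) * zetaVal (p+2-j) / (n:ℝ)^j)/n := by
      rw [← Finset.Ico_add_one_right_eq_Icc, Finset.sum_Ico_eq_sum_range,
          ← Finset.Ico_add_one_right_eq_Icc, Finset.sum_Ico_eq_sum_range]
      simp only [Nat.add_sub_cancel]
      rw [Finset.sum_range_succ']
      have h0 : (-1:ℝ)^(1+0-1) * zetaVal (p+1+2-(1+0)) / (n:ℝ)^(1+0) = zetaVal (p+2)/n := by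
        norm_num
      have hterm : ∀ i ∈ range p,
          (-1:ℝ)^(1+(i+1)-1) * zetaVal (p+1+2-(1+(i+1))) / (n:ℝ)^(1+(i+1))
            = -((-1:ℝ)^(1+i-1) * zetaVal (p+2-(1+i)) / (n:ℝ)^(1+i) / n) := by
        intro i hi
        have h1 : 1+(i+1)-1 = (1+i-1)+1 := by omega
        have h2 : p+1+2-(1+(i+1)) = p+2-(1+i) := by omega
        have h3 : 1+(i+1) = (1+i)+1 := by omega
        rw [h1, h2, h3, pow_succ, pow_succ]
        ring
      rw [Finset.sum_congr rfl hterm, h0, Finset.sum_neg_distrib, Finset.sum_div]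
      ring
    rw [key]
    rw [pow_succ (-1:ℝ) p, pow_succ (n:ℝ) (p+1)]
    ring

open MeasureTheory in
lemma integral_eq (n k : ℕ) (hn : 0 < n) (hk : 2 ≤ k) :
    ∫ x in (0:ℝ)..1, x ^ (n - 1) * Li k x
      = ∑' m : ℕ, 1/(((m:ℝ)+1)^k * ((m:ℝ)+1+n)) := by
  have hrep : ∀ x : ℝ, x ^ (n-1) * Li k x = ∑' m : ℕ, x^(n+m) / ((m:ℝ)+1)^k := by
    intro x
    rw [Li, ← tsum_mul_left]
    refine tsum_congr fun m => ?_
    rw [← mul_div_assoc, ← pow_add]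
    congr 2
    omega
  have hval : ∀ m : ℕ, ∫ x in Set.Ioc (0:ℝ) 1, x^(n+m) / ((m:ℝ)+1)^k
      = 1/(((m:ℝ)+1)^k * ((m:ℝ)+1+n)) := by
    intro m
    rw [MeasureTheory.integral_div, ← intervalIntegral.integral_of_le zero_le_one,
      integral_pow]
    rw [one_pow, zero_pow (by omega), sub_zero, div_div]
    rw [one_div, one_div]
    congr 1
    push_cast
    ring
  have hint : ∀ m : ℕ, IntegrableOn (fun x : ℝ => x^(n+m) / ((m:ℝ)+1)^k) (Set.Ioc 0 1) :=
    fun m => ((continuous_pow (n+m)).div_const _).integrableOn_Ioc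
  have hnorm : ∀ m : ℕ, ∫ x in Set.Ioc (0:ℝ) 1, ‖x^(n+m) / ((m:ℝ)+1)^k‖
      = 1/(((m:ℝ)+1)^k * ((m:ℝ)+1+n)) := by
    intro m
    rw [← hval m]
    refine setIntegral_congr_fun measurableSet_Ioc fun x hx => ?_
    have hx0 : (0:ℝ) ≤ x := le_of_lt hx.1
    rw [Real.norm_eq_abs, abs_of_nonneg (by positivity)]
  have hsum : Summable (fun m : ℕ => ∫ x in Set.Ioc (0:ℝ) 1, ‖x^(n+m) / ((m:ℝ)+1)^k‖) := by
    simp only [hnorm]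
    exact summable_S k n (by omega) hn
  rw [intervalIntegral.integral_of_le zero_le_one]
  simp only [hrep]
  rw [← MeasureTheory.integral_tsum_of_summable_integral_norm hint hsum]
  exact tsum_congr hval

theorem stmt9 (n k : ℕ) (hn : 0 < n) (hk : 2 ≤ k) :
    ∫ x in (0:ℝ)..1, x ^ (n - 1) * Li k x
      = (∑ j ∈ Finset.Icc 1 (k - 1), (-1 : ℝ) ^ (j - 1) * zetaVal (k + 1 - j) / (n : ℝ) ^ j)
        + (-1 : ℝ) ^ (k - 1) * harmonicNum n / (n : ℝ) ^ k := by
  obtain ⟨p, rfl⟩ : ∃ p, k = p + 1 := ⟨k - 1, by omega⟩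
  rw [integral_eq n (p+1) hn hk, S_eq n hn p]
  norm_num
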